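/- Suppose $y_{\text{truth}} = \mu + \kappa u + \tilde\epsilon$ and for each $\lambda \in [0,1)$ let $y^{(\lambda)} = \mu + \frac{\gamma(\lambda)}{2} u$ with $\gamma(\lambda) = \lambda/(1-\lambda)$, where $\mu, u$ are random vectors, $\tilde\epsilon$ is mean-zero and independent of $(\mu, u)$, $\kappa > 0$, and $\mathbb{E}\|u\|^2 > 0$. Then there exists $\lambda > 0$ such that $\mathbb{E}\|y^{(\lambda)} - y_{\text{truth}}\|^2 < \mathbb{E}\|y^{(0)} - y_{\text{truth}}\|^2$. -/

import Mathlib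

open MeasureTheory

/-- Theorem 1 of the paper: with y_truth = μ + κ u + ε̃ and
y^{(λ)} = μ + (γ(λ)/2) u, γ(λ) = λ/(1-λ), ε̃ mean zero and uncorrelated with u
(from independence), κ > 0 and E‖u‖² > 0, there exists λ > 0 with
E‖y^{(λ)} - y_truth‖² < E‖y^{(0)} - y_truth‖². -/
theorem stmt4 (d : ℕ)
    (Ω : Type*) [MeasureSpace Ω] [IsProbabilityMeasure (volume : Measure Ω)]
    (μ u ε : Ω → EuclideanSpace ℝ (Fin d))
    (κ : ℝ) (hκ : 0 < κ)
    (γ : ℝ → ℝ) (hγ : ∀ l, γ l = l / (1 - l))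
    (ytruth : Ω → EuclideanSpace ℝ (Fin d))
    (hyt : ∀ ω, ytruth ω = μ ω + κ • u ω + ε ω)
    (y : ℝ → Ω → EuclideanSpace ℝ (Fin d))
    (hy : ∀ l ω, y l ω = μ ω + (γ l / 2) • u ω)
    (hε0 : ∫ ω, ε ω = 0)
    (hcross : ∫ ω, (inner ℝ (u ω) (ε ω) : ℝ) = 0)
    (hu2 : Integrable (fun ω => ‖u ω‖ ^ 2))
    (hε2 : Integrable (fun ω => ‖ε ω‖ ^ 2))
    (hcrossInt : Integrable (fun ω => (inner ℝ (u ω) (ε ω) : ℝ)))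
    (hu : 0 < ∫ ω, ‖u ω‖ ^ 2) :
    ∃ l : ℝ, 0 < l ∧ l < 1 ∧
      ∫ ω, ‖y l ω - ytruth ω‖ ^ 2 < ∫ ω, ‖y 0 ω - ytruth ω‖ ^ 2 := by
  refine ⟨2 * κ / (1 + 2 * κ), ?_, ?_, ?_⟩
  · positivity
  · rw [div_lt_one (by positivity)]; linarith
  · have hden : (1 : ℝ) + 2 * κ ≠ 0 := by positivity
    have hγl : γ (2 * κ / (1 + 2 * κ)) = 2 * κ := by
      rw [hγ]
      field_simp
      ring
    have h1 : ∀ ω, y (2 * κ / (1 + 2 * κ)) ω - ytruth ω = -ε ω := by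
      intro ω
      rw [hy, hyt, hγl]
      have : (2 * κ / 2 : ℝ) = κ := by ring
      rw [this]
      abel
    have h0 : ∀ ω, y 0 ω - ytruth ω = -(κ • u ω + ε ω) := by
      intro ω
      rw [hy, hyt, hγ]
      norm_num
      abel
    have e1 : ∫ ω, ‖y (2 * κ / (1 + 2 * κ)) ω - ytruth ω‖ ^ 2 = ∫ ω, ‖ε ω‖ ^ 2 := by
      refine integral_congr_ae (Filter.Eventually.of_forall fun ω => ?_)
      simp only [h1, norm_neg]
    have e0 : ∫ ω, ‖y 0 ω - ytruth ω‖ ^ 2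
        = ∫ ω, (κ ^ 2 * ‖u ω‖ ^ 2 + 2 * κ * (inner ℝ (u ω) (ε ω) : ℝ) + ‖ε ω‖ ^ 2) := by
      refine integral_congr_ae (Filter.Eventually.of_forall fun ω => ?_)
      simp only [h0, norm_neg]
      rw [norm_add_sq_real, norm_smul, real_inner_smul_left]
      simp [abs_of_pos hκ]
      ring
    rw [e1, e0]
    rw [integral_add (by exact (hu2.const_mul _).add (hcrossInt.const_mul _)) hε2,
      integral_add (hu2.const_mul _) (hcrossInt.const_mul _),
      integral_const_mul, integral_const_mul, hcross]
    nlinarith [mul_pos (pow_pos hκ 2) hu]
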